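/- Let n ≥ 2, let T be an n×n Markov matrix, and let M be a random n×n matrix distributed as U(M_n) (rows i.i.d. uniform on the simplex Λ_n). Then the matrix product M·T has the same law as M if and only if T is a permutation matrix. -/

import Mathlib

open MeasureTheory ProbabilityTheory

noncomputable section

/-- The standard simplex `Λ_n ⊆ ℝ^n` (Euclidean space). -/
def simplexSet (n : ℕ) : Set (EuclideanSpace ℝ (Fin n)) :=
  {x | (∀ i, 0 ≤ x i) ∧ ∑ i, x i = 1}

/-- The uniform distribution on `Λ_n`: normalized `(n-1)`-dimensional Hausdorff measure. -/
def simplexUniformE (n : ℕ) : Measure (EuclideanSpace ℝ (Fin n)) :=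
  (μH[(n : ℝ) - 1] (simplexSet n))⁻¹ • (μH[(n : ℝ) - 1]).restrict (simplexSet n)

/-- The uniform distribution on `Λ_n`, transported to the plain function space `Fin n → ℝ`. -/
def simplexUniform (n : ℕ) : Measure (Fin n → ℝ) :=
  (simplexUniformE n).map (MeasurableEquiv.toLp 2 (Fin n → ℝ)).symm

/-- `U(M_n)`: the law of a random `n × n` matrix (rows first) with i.i.d. rows uniform on `Λ_n`. -/
def markovUniform (n : ℕ) : Measure (Fin n → Fin n → ℝ) :=
  Measure.pi fun _ : Fin n => simplexUniform n

/-- A matrix (rows first) is Markov: non-negative entries and each row sums to `1`. -/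
def IsMarkovMatrix {n : ℕ} (T : Fin n → Fin n → ℝ) : Prop :=
  (∀ i j, 0 ≤ T i j) ∧ ∀ i, ∑ j, T i j = 1

/-- A permutation matrix: a 0–1 matrix with exactly one `1` in each row and each column. -/
def IsPermutationMatrix {n : ℕ} (T : Fin n → Fin n → ℝ) : Prop :=
  ∃ σ : Equiv.Perm (Fin n), ∀ i j, T i j = if σ i = j then 1 else 0

lemma simplexUniform_eq (n : ℕ) :
    simplexUniform n = (simplexUniformE n).map (MeasurableEquiv.toLp 2 (Fin n → ℝ)).symm := rfl

lemma measurableSet_simplexSet (n : ℕ) : MeasurableSet (simplexSet n) := by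
  have h1 : MeasurableSet {x : EuclideanSpace ℝ (Fin n) | ∀ i, 0 ≤ x i} := by
    rw [Set.setOf_forall]
    exact MeasurableSet.iInter fun i =>
      measurableSet_le measurable_const
        (show Measurable fun x : EuclideanSpace ℝ (Fin n) => x i from
          (measurable_pi_apply i).comp (WithLp.measurable_ofLp 2 (Fin n → ℝ)))
  have h2 : MeasurableSet {x : EuclideanSpace ℝ (Fin n) | ∑ i, x i = 1} :=
    measurableSet_eq_fun
      (Finset.measurable_sum _ fun i _ =>
        show Measurable fun x : EuclideanSpace ℝ (Fin n) => x i from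
          (measurable_pi_apply i).comp (WithLp.measurable_ofLp 2 (Fin n → ℝ)))
      measurable_const
  exact h1.inter h2

lemma measurable_permMap {n : ℕ} (σ : Equiv.Perm (Fin n)) :
    Measurable (fun (x : Fin n → ℝ) => fun j => x (σ j)) :=
  measurable_pi_iff.mpr fun j => measurable_pi_apply (σ j)

lemma simplexUniform_map_perm (n : ℕ) (σ : Equiv.Perm (Fin n)) :
    (simplexUniform n).map (fun x => fun j => x (σ j)) = simplexUniform n := by
  classical
  set E := EuclideanSpace ℝ (Fin n)
  set d : ℝ := (n : ℝ) - 1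
  let Φ : E ≃ᵢ E := (LinearIsometryEquiv.piLpCongrLeft 2 ℝ ℝ (σ.symm : Fin n ≃ Fin n)).toIsometryEquiv
  have hΦ : ∀ x : E, (Φ x).ofLp = fun j => x (σ j) := by
    intro x; funext j
    show (LinearIsometryEquiv.piLpCongrLeft 2 ℝ ℝ (σ.symm : Fin n ≃ Fin n)) x j = x (σ j)
    rw [LinearIsometryEquiv.piLpCongrLeft_apply]
    simp [Equiv.piCongrLeft']
  have hpre : Φ ⁻¹' (simplexSet n) = simplexSet n := by
    ext x
    show ((∀ i, 0 ≤ (Φ x) i) ∧ ∑ i, (Φ x) i = 1) ↔ ((∀ i, 0 ≤ x i) ∧ ∑ i, x i = 1)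
    rw [hΦ x]
    beta_reduce
    have hsum : ∑ i, x (σ i) = ∑ i, x i := Fintype.sum_equiv σ _ _ fun i => rfl
    constructor
    · rintro ⟨h1, h2⟩
      refine ⟨fun i => by simpa using h1 (σ.symm i), ?_⟩
      rw [← hsum]; exact h2
    · rintro ⟨h1, h2⟩
      exact ⟨fun i => h1 (σ i), by rw [hsum]; exact h2⟩
  have hmapH : (μH[d] : Measure E).map Φ = μH[d] := Φ.map_hausdorffMeasure d
  have key : ((μH[d] : Measure E).restrict (simplexSet n)).map Φ
      = (μH[d] : Measure E).restrict (simplexSet n) := by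
    conv_rhs => rw [← hmapH]
    rw [Measure.restrict_map Φ.continuous.measurable (measurableSet_simplexSet n), hpre]
  have hE : (simplexUniformE n).map Φ = simplexUniformE n := by
    unfold simplexUniformE
    rw [Measure.map_smul, key]
  rw [simplexUniform_eq, Measure.map_map (measurable_permMap σ) (MeasurableEquiv.measurable _)]
  have hc : (fun x : Fin n → ℝ => fun j => x (σ j)) ∘ (MeasurableEquiv.toLp 2 (Fin n → ℝ)).symm
      = (MeasurableEquiv.toLp 2 (Fin n → ℝ)).symm ∘ Φ := by
    funext x
    simp only [Function.comp_apply, MeasurableEquiv.toLp_symm_apply, hΦ]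
  rw [hc, ← Measure.map_map (MeasurableEquiv.measurable _) Φ.continuous.measurable, hE]

lemma simplexUniform_ae (n : ℕ) :
    ∀ᵐ x ∂(simplexUniform n), (∀ i, 0 ≤ x i) ∧ ∑ i, x i = 1 := by
  rw [simplexUniform_eq, (MeasurableEquiv.toLp 2 (Fin n → ℝ)).symm.measurableEmbedding.ae_map_iff]
  unfold simplexUniformE
  filter_upwards [Measure.ae_smul_measure (ae_restrict_mem (measurableSet_simplexSet n)) _]
    with x hx
  exact hx

lemma simplexUniform_singleton (n : ℕ) (hn : 2 ≤ n) (c : Fin n → ℝ) :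
    simplexUniform n {c} = 0 := by
  rw [simplexUniform_eq, MeasurableEquiv.map_apply]
  have hpc : (MeasurableEquiv.toLp 2 (Fin n → ℝ)).symm ⁻¹' {c} = {WithLp.toLp 2 c} := by
    ext x
    simp only [Set.mem_preimage, MeasurableEquiv.toLp_symm_apply, Set.mem_singleton_iff]
    constructor
    · rintro rfl; rfl
    · rintro rfl; rfl
  rw [hpc]
  unfold simplexUniformE
  have hd : (0:ℝ) < (n:ℝ) - 1 := by
    have : (2:ℝ) ≤ (n:ℝ) := by exact_mod_cast hn
    linarith
  haveI := MeasureTheory.Measure.noAtoms_hausdorff (EuclideanSpace ℝ (Fin n)) hd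
  have h0 : μH[(n : ℝ) - 1] (({WithLp.toLp 2 c} : Set (EuclideanSpace ℝ (Fin n))) ∩ simplexSet n)
      = 0 :=
    measure_mono_null Set.inter_subset_left (measure_singleton _)
  show ((μH[(n : ℝ) - 1] (simplexSet n))⁻¹ •
      (μH[(n : ℝ) - 1]).restrict (simplexSet n)) ({WithLp.toLp 2 c} : Set (EuclideanSpace ℝ (Fin n))) = 0
  rw [Measure.smul_apply, Measure.restrict_apply (measurableSet_singleton _), h0, smul_zero]

lemma integrable_aux {n : ℕ} [IsProbabilityMeasure (simplexUniform n)]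
    {f : (Fin n → ℝ) → ℝ} (hf : Measurable f)
    (hb : ∀ x : Fin n → ℝ, ((∀ i, 0 ≤ x i) ∧ ∑ i, x i = 1) → |f x| ≤ 1) :
    Integrable f (simplexUniform n) := by
  refine ⟨hf.aestronglyMeasurable, HasFiniteIntegral.of_bounded (C := 1) ?_⟩
  filter_upwards [simplexUniform_ae n] with x hx
  simpa [Real.norm_eq_abs] using hb x hx

lemma coord_le_one {n : ℕ} {x : Fin n → ℝ} (hx : (∀ i, 0 ≤ x i) ∧ ∑ i, x i = 1) (i : Fin n) :
    x i ≤ 1 := by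
  rw [← hx.2]
  exact Finset.single_le_sum (fun j _ => hx.1 j) (Finset.mem_univ i)

lemma integrable_coord {n : ℕ} [IsProbabilityMeasure (simplexUniform n)] (i : Fin n) :
    Integrable (fun x : Fin n → ℝ => x i) (simplexUniform n) :=
  integrable_aux (measurable_pi_apply i) (fun x hx =>
    abs_le.2 ⟨by linarith [hx.1 i], coord_le_one hx i⟩)

lemma integrable_coord_mul {n : ℕ} [IsProbabilityMeasure (simplexUniform n)] (i j : Fin n) :
    Integrable (fun x : Fin n → ℝ => x i * x j) (simplexUniform n) := by
  refine integrable_aux ((measurable_pi_apply i).mul (measurable_pi_apply j)) (fun x hx => ?_)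
  rw [abs_mul]
  have h1 : |x i| ≤ 1 := abs_le.2 ⟨by linarith [hx.1 i], coord_le_one hx i⟩
  have h2 : |x j| ≤ 1 := abs_le.2 ⟨by linarith [hx.1 j], coord_le_one hx j⟩
  nlinarith [abs_nonneg (x i), abs_nonneg (x j)]

/-- Integral of a function after a coordinate permutation. -/
lemma integral_perm {n : ℕ} (σ : Equiv.Perm (Fin n)) {f : (Fin n → ℝ) → ℝ}
    (hf : Measurable f) :
    ∫ x, f (fun j => x (σ j)) ∂(simplexUniform n) = ∫ x, f x ∂(simplexUniform n) := by
  conv_rhs => rw [← simplexUniform_map_perm n σ]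
  rw [integral_map (measurable_permMap σ).aemeasurable hf.aestronglyMeasurable]


lemma exists_perm_pair {α : Type*} [DecidableEq α] {a b c d : α} (hab : a ≠ b) (hcd : c ≠ d) :
    ∃ σ : Equiv.Perm α, σ a = c ∧ σ b = d := by
  classical
  refine ⟨(Equiv.swap a c).trans (Equiv.swap ((Equiv.swap a c) b) d), ?_, ?_⟩
  · simp only [Equiv.trans_apply, Equiv.swap_apply_left]
    apply Equiv.swap_apply_of_ne_of_ne
    · intro h
      have h2 := congrArg (Equiv.swap a c) h.symm
      rw [Equiv.swap_apply_self, Equiv.swap_apply_right] at h2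
      exact hab h2.symm
    · exact hcd
  · simp only [Equiv.trans_apply, Equiv.swap_apply_left]

lemma pi_map_eval {n : ℕ} [IsProbabilityMeasure (simplexUniform n)] (r : Fin n)
    {t : Set (Fin n → ℝ)} (ht : MeasurableSet t) :
    Measure.pi (fun _ : Fin n => simplexUniform n) (Function.eval r ⁻¹' t)
      = simplexUniform n t := by
  classical
  rw [Set.eval_preimage, Measure.pi_pi]
  refine (Fintype.prod_eq_single r fun j hj => ?_).trans (by rw [Function.update_self])
  rw [Function.update_of_ne hj]
  exact measure_univ

lemma forward_perm {n : ℕ} (hn : 2 ≤ n) (T : Fin n → Fin n → ℝ) (hT : IsMarkovMatrix T)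
    [IsProbabilityMeasure (simplexUniform n)]
    (h : (simplexUniform n).map (fun x => fun j => ∑ k, x k * T k j) = simplexUniform n) :
    IsPermutationMatrix T := by
  classical
  obtain ⟨hTnn, hTrow⟩ := hT
  set ν := simplexUniform n with hνdef
  have hTle : ∀ i j, T i j ≤ 1 := by
    intro i j
    calc T i j ≤ ∑ j', T i j' :=
          Finset.single_le_sum (fun j' _ => hTnn i j') (Finset.mem_univ j)
    _ = 1 := hTrow i
  set p0 : Fin n := ⟨0, by omega⟩ with hp0def
  set p1 : Fin n := ⟨1, by omega⟩ with hp1def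
  have hp01 : p0 ≠ p1 := by simp [hp0def, hp1def, Fin.ext_iff]
  have hg : Measurable (fun x : Fin n → ℝ => fun j => ∑ k, x k * T k j) :=
    measurable_pi_iff.mpr fun j =>
      Finset.measurable_sum _ fun k _ => (measurable_pi_apply k).mul_const _
  -- first moments
  have hm : ∀ i, ∫ x, x i ∂ν = ∫ x, x p0 ∂ν := by
    intro i
    have h2 := integral_perm (Equiv.swap p0 i) (f := fun x => x p0) (measurable_pi_apply p0)
    simpa [Equiv.swap_apply_left] using h2
  have hnR : (0:ℝ) < (n:ℝ) := by positivity
  have hsum1 : ∑ i : Fin n, ∫ x, x i ∂ν = 1 := by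
    rw [← integral_finset_sum _ (fun i _ => integrable_coord i)]
    have h2 : ∫ x, (∑ i, x i) ∂ν = ∫ _x, (1:ℝ) ∂ν :=
      integral_congr_ae ((simplexUniform_ae n).mono fun x hx => hx.2)
    rw [h2]; simp
  have hm0 : ∫ x, x p0 ∂ν = 1 / n := by
    have h2 : (n:ℝ) * ∫ x, x p0 ∂ν = 1 := by
      rw [← hsum1, Finset.sum_congr rfl fun i _ => hm i]
      simp [Finset.card_univ, mul_comm]
    field_simp at h2 ⊢
    linarith
  -- second moments
  set a : ℝ := ∫ x, x p0 * x p0 ∂ν with hadef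
  set b : ℝ := ∫ x, x p0 * x p1 ∂ν with hbdef
  have hii : ∀ i, ∫ x, x i * x i ∂ν = a := by
    intro i
    have h2 := integral_perm (Equiv.swap p0 i) (f := fun x => x p0 * x p0)
      ((measurable_pi_apply p0).mul (measurable_pi_apply p0))
    simpa [Equiv.swap_apply_left] using h2
  have hij : ∀ i j, i ≠ j → ∫ x, x i * x j ∂ν = b := by
    intro i j hne
    obtain ⟨σ, h1, h2⟩ := exists_perm_pair hp01 hne
    have h3 := integral_perm σ (f := fun x => x p0 * x p1)
      ((measurable_pi_apply p0).mul (measurable_pi_apply p1))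
    simpa [h1, h2] using h3
  -- nondegeneracy : a ≠ b
  have hab : a ≠ b := by
    intro hEq
    have hpair : ∀ i j : Fin n, i ≠ j → ∀ᵐ x ∂ν, x i = x j := by
      intro i j hne
      have hrepr : (fun x : Fin n → ℝ => (x i - x j)^2)
          = fun x => x i * x i - x i * x j - (x j * x i - x j * x j) := by
        funext x; ring
      have hint : Integrable (fun x : Fin n → ℝ => (x i - x j)^2) ν := by
        rw [hrepr]
        exact ((integrable_coord_mul i i).sub (integrable_coord_mul i j)).sub
          ((integrable_coord_mul j i).sub (integrable_coord_mul j j))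
      have I1 : Integrable (fun x : Fin n → ℝ => x i * x i - x i * x j) ν :=
        (integrable_coord_mul i i).sub (integrable_coord_mul i j)
      have I2 : Integrable (fun x : Fin n → ℝ => x j * x i - x j * x j) ν :=
        (integrable_coord_mul j i).sub (integrable_coord_mul j j)
      have E1 : ∫ x, (x i * x i - x i * x j) ∂ν = a - b := by
        rw [integral_sub (integrable_coord_mul i i) (integrable_coord_mul i j), hii i,
          hij i j hne]
      have E2 : ∫ x, (x j * x i - x j * x j) ∂ν = b - a := by
        rw [integral_sub (integrable_coord_mul j i) (integrable_coord_mul j j), hii j,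
          hij j i (Ne.symm hne)]
      have hz : ∫ x, (x i - x j)^2 ∂ν = 0 := by
        rw [hrepr, integral_sub I1 I2, E1, E2]
        linarith
      have h0 := (integral_eq_zero_iff_of_nonneg (fun x => sq_nonneg _) hint).1 hz
      filter_upwards [h0] with x hx
      have hx2 : (x i - x j)^2 = 0 := hx
      have := pow_eq_zero_iff (n := 2) (by norm_num) |>.1 hx2
      linarith [sub_eq_zero.1 this]
    have hall : ∀ᵐ x ∂ν, ∀ i j : Fin n, x i = x j := by
      rw [ae_all_iff]
      intro i
      rw [ae_all_iff]
      intro j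
      by_cases hne : i = j
      · subst hne; exact Filter.Eventually.of_forall fun _ => rfl
      · exact hpair i j hne
    have hconst : ∀ᵐ x ∂ν, x = (fun _ => (1:ℝ)/n) := by
      filter_upwards [hall, simplexUniform_ae n] with x hx hx2
      funext i
      have hs : ∑ j, x j = n * x i := by
        rw [Finset.sum_congr rfl (fun j _ => hx j i)]
        simp [Finset.card_univ, mul_comm]
      have h3 : (n:ℝ) * x i = 1 := by rw [← hs]; exact hx2.2
      field_simp
      linarith
    have hcompl : ν ({(fun _ => (1:ℝ)/n)} : Set (Fin n → ℝ))ᶜ = 0 := by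
      have h2 := ae_iff.1 hconst
      exact h2
    have hzero : (1:ENNReal) = 0 := by
      have h2 := measure_add_measure_compl
        (μ := ν) (measurableSet_singleton (fun _ => (1:ℝ)/n))
      rw [hcompl, measure_univ, add_zero, hνdef, simplexUniform_singleton n hn] at h2
      exact h2.symm
    exact one_ne_zero hzero
  -- column sums are 1
  have hcol : ∀ j, ∑ k, T k j = 1 := by
    intro j
    have h2 : ∫ x, x j ∂(ν.map (fun x => fun j' => ∑ k, x k * T k j'))
        = ∫ x, (∑ k, x k * T k j) ∂ν := by
      rw [integral_map hg.aemeasurable (measurable_pi_apply j).aestronglyMeasurable]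
    have h3 : ∫ x, (∑ k, x k * T k j) ∂ν = ∑ k, (∫ x, x k ∂ν) * T k j := by
      rw [integral_finset_sum _ (fun k _ => (integrable_coord k).mul_const _)]
      exact Finset.sum_congr rfl fun k _ => integral_mul_const _ _
    have h4 : (1:ℝ)/n * ∑ k, T k j = 1/n * 1 := by
      have h5 : ∑ k, (∫ x, x k ∂ν) * T k j = ∑ k, (1/n : ℝ) * T k j :=
        Finset.sum_congr rfl fun k _ => by rw [hm k, hm0]
      rw [← Finset.mul_sum] at h5
      rw [mul_one]
      calc (1:ℝ)/n * ∑ k, T k j = ∑ k, (∫ x, x k ∂ν) * T k j := h5.symm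
      _ = ∫ x, (∑ k, x k * T k j) ∂ν := h3.symm
      _ = ∫ x, x j ∂ν := by rw [← h2, h]
      _ = 1/n := by rw [hm j, hm0]
    have hne : (1:ℝ)/n ≠ 0 := by positivity
    exact mul_left_cancel₀ hne h4
  -- column sums of squares are 1
  have hsq : ∀ j, ∑ k, T k j * T k j = 1 := by
    intro j
    have h1 : ∫ x, x j * x j ∂(ν.map (fun x => fun j' => ∑ k, x k * T k j')) = a := by
      rw [h]; exact hii j
    have h2 : ∫ x, x j * x j ∂(ν.map (fun x => fun j' => ∑ k, x k * T k j'))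
        = ∫ x, (∑ k, x k * T k j) * (∑ l, x l * T l j) ∂ν := by
      rw [integral_map hg.aemeasurable (f := fun x : Fin n → ℝ => x j * x j)
        ((measurable_pi_apply j).mul (measurable_pi_apply j)).aestronglyMeasurable]
    have h3 : (fun x : Fin n → ℝ => (∑ k, x k * T k j) * (∑ l, x l * T l j))
        = fun x => ∑ k, ∑ l, x k * x l * (T k j * T l j) := by
      funext x
      rw [Finset.sum_mul_sum]
      exact Finset.sum_congr rfl fun k _ => Finset.sum_congr rfl fun l _ => by ring
    have I3 : ∀ k, Integrable (fun x : Fin n → ℝ => ∑ l, x k * x l * (T k j * T l j)) ν :=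
      fun k => integrable_finset_sum _ fun l _ => (integrable_coord_mul k l).mul_const _
    have h4 : ∫ x, (∑ k, ∑ l, x k * x l * (T k j * T l j)) ∂ν
        = ∑ k, ∑ l, (∫ x, x k * x l ∂ν) * (T k j * T l j) := by
      rw [integral_finset_sum _ (fun k _ => I3 k)]
      refine Finset.sum_congr rfl fun k _ => ?_
      rw [integral_finset_sum _ (fun l _ => (integrable_coord_mul k l).mul_const _)]
      exact Finset.sum_congr rfl fun l _ => integral_mul_const _ _
    have e5 : ∀ k l, (∫ x, x k * x l ∂ν) * (T k j * T l j)
        = b * (T k j * T l j) + (if l = k then (a - b) * (T k j * T k j) else 0) := by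
      intro k l
      by_cases hkl : l = k
      · subst hkl; rw [if_pos rfl, hii l]; ring
      · rw [if_neg hkl, hij k l (fun hh => hkl hh.symm), add_zero]
    have h5 : ∑ k, ∑ l, (∫ x, x k * x l ∂ν) * (T k j * T l j)
        = b + (a - b) * ∑ k, T k j * T k j := by
      rw [Finset.sum_congr rfl fun k (_ : k ∈ Finset.univ) =>
        Finset.sum_congr rfl fun l (_ : l ∈ Finset.univ) => e5 k l]
      rw [Finset.sum_congr rfl fun k (_ : k ∈ Finset.univ) =>
        (Finset.sum_add_distrib (s := Finset.univ)
          (f := fun l => b * (T k j * T l j))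
          (g := fun l => if l = k then (a - b) * (T k j * T k j) else 0))]
      rw [Finset.sum_add_distrib]
      have t1 : ∑ k, ∑ l, b * (T k j * T l j) = b := by
        calc ∑ k, ∑ l, b * (T k j * T l j)
            = ∑ k, b * (T k j * ∑ l, T l j) :=
              Finset.sum_congr rfl fun k _ => by rw [← Finset.mul_sum, ← Finset.mul_sum]
          _ = ∑ k, b * T k j := by rw [hcol j]; simp
          _ = b := by rw [← Finset.mul_sum, hcol j, mul_one]
      have t2 : ∑ k, ∑ l, (if l = k then (a - b) * (T k j * T k j) else 0)
          = (a - b) * ∑ k, T k j * T k j := by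
        rw [Finset.sum_congr rfl fun k (_ : k ∈ Finset.univ) =>
          (Finset.sum_ite_eq' Finset.univ k (fun _ => (a - b) * (T k j * T k j)))]
        simp [Finset.mul_sum]
      rw [t1, t2]
    have hfinal : a = b + (a - b) * ∑ k, T k j * T k j := by
      calc a = ∫ x, x j * x j ∂(ν.map (fun x => fun j' => ∑ k, x k * T k j')) := h1.symm
      _ = ∫ x, (∑ k, x k * T k j) * (∑ l, x l * T l j) ∂ν := h2
      _ = ∫ x, (∑ k, ∑ l, x k * x l * (T k j * T l j)) ∂ν := by rw [h3]
      _ = ∑ k, ∑ l, (∫ x, x k * x l ∂ν) * (T k j * T l j) := h4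
      _ = b + (a - b) * ∑ k, T k j * T k j := h5
    have hSne : a - b ≠ 0 := sub_ne_zero_of_ne hab
    have : (a - b) * 1 = (a - b) * ∑ k, T k j * T k j := by linarith
    exact (mul_left_cancel₀ hSne this).symm
  -- entries are 0 or 1
  have h01 : ∀ k j, T k j = 0 ∨ T k j = 1 := by
    intro k j
    have hsum0 : ∑ k', (T k' j - T k' j * T k' j) = 0 := by
      rw [Finset.sum_sub_distrib, hcol j, hsq j, sub_self]
    have hterm : ∀ k' ∈ Finset.univ, (0:ℝ) ≤ T k' j - T k' j * T k' j := by
      intro k' _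
      nlinarith [hTnn k' j, hTle k' j]
    have hk := (Finset.sum_eq_zero_iff_of_nonneg hterm).1 hsum0 k (Finset.mem_univ k)
    have : T k j * (1 - T k j) = 0 := by linarith
    rcases mul_eq_zero.1 this with h' | h'
    · exact Or.inl h'
    · exact Or.inr (by linarith)
  -- build the permutation
  have hrow_ex : ∀ i, ∃ j, T i j = 1 := by
    intro i
    by_contra hc
    push_neg at hc
    have : ∑ j, T i j = 0 :=
      Finset.sum_eq_zero fun j _ => (h01 i j).resolve_right (hc j)
    rw [hTrow i] at this
    norm_num at this
  have two_sum : ∀ (f : Fin n → ℝ), (∀ k, 0 ≤ f k) → (∀ j j' : Fin n, j ≠ j' →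
      f j = 1 → f j' = 1 → ¬ (∑ k, f k = 1)) := by
    intro f hf j j' hne h1 h2 hs
    have hp : ({j, j'} : Finset (Fin n)).sum f = 2 := by
      rw [Finset.sum_pair hne, h1, h2]; norm_num
    have hle : ({j, j'} : Finset (Fin n)).sum f ≤ ∑ k, f k :=
      Finset.sum_le_sum_of_subset_of_nonneg (Finset.subset_univ _) fun k _ _ => hf k
    rw [hp, hs] at hle
    norm_num at hle
  have hrow_uniq : ∀ i j j', T i j = 1 → T i j' = 1 → j = j' := by
    intro i j j' h1 h2
    by_contra hne
    exact two_sum (T i) (hTnn i) j j' hne h1 h2 (hTrow i)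
  have hcol_uniq : ∀ j i i', T i j = 1 → T i' j = 1 → i = i' := by
    intro j i i' h1 h2
    by_contra hne
    exact two_sum (fun k => T k j) (fun k => hTnn k j) i i' hne h1 h2 (hcol j)
  choose sf hsf using hrow_ex
  have hinj : Function.Injective sf := by
    intro i i' he
    exact hcol_uniq (sf i) i i' (hsf i) (he ▸ hsf i')
  refine ⟨Equiv.ofBijective sf (Finite.injective_iff_bijective.1 hinj), fun i j => ?_⟩
  show T i j = if sf i = j then 1 else 0
  by_cases hj : sf i = j
  · rw [if_pos hj, ← hj]
    exact hsf i
  · rw [if_neg hj]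
    refine (h01 i j).resolve_right fun h1 => hj ?_
    exact hrow_uniq i (sf i) j (hsf i) h1

instance simplexUniform_finite (n : ℕ) : IsFiniteMeasure (simplexUniform n) := by
  constructor
  rw [simplexUniform_eq, MeasurableEquiv.map_apply, Set.preimage_univ]
  show ((μH[(n : ℝ) - 1] (simplexSet n))⁻¹ •
      (μH[(n : ℝ) - 1]).restrict (simplexSet n)) (Set.univ : Set (EuclideanSpace ℝ (Fin n))) < ⊤
  rw [Measure.smul_apply, Measure.restrict_apply_univ]
  by_cases h0 : μH[(n : ℝ) - 1] (simplexSet n) = 0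
  · simp [h0]
  by_cases ht : μH[(n : ℝ) - 1] (simplexSet n) = ⊤
  · simp [ht]
  · rw [smul_eq_mul, ENNReal.inv_mul_cancel h0 ht]
    exact ENNReal.one_lt_top

/-- if `n ≥ 2`, `T` is an `n × n` Markov matrix and `M ~ U(M_n)`, then the
product `M·T` has the same law as `M` if and only if `T` is a permutation matrix. -/
theorem markovUniform_right_translation_invariant_iff (n : ℕ) (hn : 2 ≤ n)
    (T : Fin n → Fin n → ℝ) (hT : IsMarkovMatrix T)
    {Ω : Type*} [MeasurableSpace Ω] (P : Measure Ω) [IsProbabilityMeasure P]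
    (M : Ω → Fin n → Fin n → ℝ) (hM : Measurable M)
    (hlaw : P.map M = markovUniform n) :
    P.map (fun ω => fun i j => ∑ k, M ω i k * T k j) = P.map M ↔
      IsPermutationMatrix T := by

  classical
  have hμP : IsProbabilityMeasure (markovUniform n) :=
    hlaw ▸ Measure.isProbabilityMeasure_map hM.aemeasurable
  haveI hνP : IsProbabilityMeasure (simplexUniform n) := by
    constructor
    have h1 : (markovUniform n) Set.univ = 1 := measure_univ
    unfold markovUniform at h1
    rw [Measure.pi_univ, Finset.prod_const, Finset.card_univ, Fintype.card_fin] at h1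
    by_contra hne
    rcases lt_or_gt_of_ne hne with hlt | hgt
    · have h2 : simplexUniform n Set.univ ^ n < 1 :=
        pow_lt_one₀ (zero_le) hlt (by omega)
      rw [h1] at h2
      exact lt_irrefl _ h2
    · have h2 : (1:ENNReal) < simplexUniform n Set.univ ^ n :=
        one_lt_pow₀ hgt (by omega)
      rw [h1] at h2
      exact lt_irrefl _ h2
  set F : (Fin n → Fin n → ℝ) → (Fin n → Fin n → ℝ) :=
    fun A => fun i j => ∑ k, A i k * T k j with hFdef
  have hF : Measurable F :=
    measurable_pi_iff.mpr fun i => measurable_pi_iff.mpr fun j =>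
      Finset.measurable_sum _ fun k _ =>
        ((measurable_pi_apply k).comp (measurable_pi_apply i)).mul_const _
  have hg : Measurable (fun x : Fin n → ℝ => fun j => ∑ k, x k * T k j) :=
    measurable_pi_iff.mpr fun j =>
      Finset.measurable_sum _ fun k _ => (measurable_pi_apply k).mul_const _
  have hcomp : P.map (fun ω => fun i j => ∑ k, M ω i k * T k j) = (P.map M).map F :=
    (Measure.map_map hF hM).symm
  rw [hcomp, hlaw]
  constructor
  · intro hmain
    -- marginal: the single-row map preserves simplexUniform
    have hrow : (simplexUniform n).map (fun x => fun j => ∑ k, x k * T k j)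
        = simplexUniform n := by
      ext s hs
      rw [Measure.map_apply hg hs]
      have r : Fin n := ⟨0, by omega⟩
      calc simplexUniform n ((fun x => fun j => ∑ k, x k * T k j) ⁻¹' s)
          = markovUniform n (Function.eval r ⁻¹'
              ((fun x => fun j => ∑ k, x k * T k j) ⁻¹' s)) :=
            (pi_map_eval r (hg hs)).symm
        _ = markovUniform n (F ⁻¹' (Function.eval r ⁻¹' s)) := rfl
        _ = (markovUniform n).map F (Function.eval r ⁻¹' s) :=
            (Measure.map_apply hF (measurable_pi_apply r hs)).symm
        _ = markovUniform n (Function.eval r ⁻¹' s) := by rw [hmain]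
        _ = simplexUniform n s := pi_map_eval r hs
    exact forward_perm hn T hT hrow
  · rintro ⟨σ, hσ⟩
    have hgform : (fun x : Fin n → ℝ => fun j => ∑ k, x k * T k j)
        = fun x => fun j => x (σ.symm j) := by
      funext x j
      have hterm : ∀ k, x k * T k j = if k = σ.symm j then x k else 0 := by
        intro k
        rw [hσ]
        by_cases hk : σ k = j
        · rw [if_pos hk, if_pos (by rw [← hk, Equiv.symm_apply_apply]), mul_one]
        · rw [if_neg hk, if_neg (fun hh => hk (by rw [hh, Equiv.apply_symm_apply])), mul_zero]
      rw [Finset.sum_congr rfl fun k _ => hterm k,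
        Finset.sum_ite_eq' Finset.univ (σ.symm j) (fun k => x k),
        if_pos (Finset.mem_univ _)]
    have hone : MeasurePreserving (fun x : Fin n → ℝ => fun j => x (σ.symm j))
        (simplexUniform n) (simplexUniform n) :=
      ⟨measurable_permMap _, simplexUniform_map_perm n σ.symm⟩
    haveI : ∀ _ : Fin n, SigmaFinite (simplexUniform n) := fun _ => inferInstance
    have hpi := measurePreserving_pi (fun _ : Fin n => simplexUniform n)
      (fun _ : Fin n => simplexUniform n) (fun _ => hone)
    have hFform : F = fun A : Fin n → Fin n → ℝ =>
        fun i => (fun x : Fin n → ℝ => fun j => x (σ.symm j)) (A i) := by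
      funext A i j
      show (fun x : Fin n → ℝ => fun j => ∑ k, x k * T k j) (A i) j = _
      rw [hgform]
    rw [hFform]
    exact hpi.map_eq
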